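/- Let G be an abelian group and A ⊆ G a finite set. Let S = A − A and S' = A + A. Then for every s ∈ S one has |S ∩ (S − s)| ≥ |A − A_s| and |S' ∩ (S' − s)| ≥ |A + A_s|. -/

import Mathlib

open Finset Pointwise

theorem sumset_intersection_containment {G : Type*} [AddCommGroup G] [DecidableEq G]
    (A : Finset G) :
    ∀ s ∈ A - A,
      (A - (A ∩ A.image (fun a => a - s))).card ≤
          ((A - A) ∩ (A - A).image (fun x => x - s)).card ∧
      (A + (A ∩ A.image (fun a => a - s))).card ≤
          ((A + A) ∩ (A + A).image (fun x => x - s)).card := by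
  intro s hs
  constructor
  · apply Finset.card_le_card_of_injOn (fun x => -x)
    · intro x hx
      simp only [Finset.mem_coe, Finset.mem_sub, Finset.mem_inter, Finset.mem_image] at hx ⊢
      obtain ⟨a, ha, b, ⟨hb, a', ha', rfl⟩, rfl⟩ := hx
      refine ⟨⟨a' - s, hb, a, ha, by abel⟩, a' - a, ⟨a', ha', a, ha, rfl⟩, by abel⟩
    · intro x _ y _ h
      exact neg_injective h
  · apply Finset.card_le_card
    intro x hx
    simp only [Finset.mem_add, Finset.mem_inter, Finset.mem_image] at hx ⊢
    obtain ⟨a, ha, b, ⟨hb, a', ha', rfl⟩, rfl⟩ := hx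
    exact ⟨⟨a, ha, a' - s, hb, rfl⟩, a + a', ⟨⟨a, ha, a', ha', rfl⟩, by abel⟩⟩
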